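/- arXiv:1011.3685 — 2 statements merged into one kernel-verified Lean document; each statement's English description precedes it below -/
import Mathlib

section
/- Let g be a uniformly Lipschitz generator. Then the following two conditions are equivalent. (a) There exists a constant C > 0 such that for all t ∈ [0,T], all y, y′ ∈ ℝⁿ and all z, z′ ∈ ℝ^{n×d}: −4⟨y⁻, g(t, y⁺ + y′, z) − g(t, y′, z′)⟩ ≤ 2·∑_{k=1}^{n} 1_{y_k<0}·|z_k − z′_k|² + C·|y⁻|². (b) For every k ∈ {1,…,n}: g_k depends on z only through its k-th row, i.e. g_k(t,y,z) = g_k(t,y,z′) whenever z_k = z′_k; and g_k is quasi-monotonously increasing, i.e. g_k(t, δ + y, z) ≥ g_k(t, y, z) for all t ∈ [0,T], y ∈ ℝⁿ, z ∈ ℝ^{n×d} and all δ ∈ ℝⁿ with δ ≥ 0 and δ_k = 0. -/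
open scoped RealInnerProductSpace

noncomputable section

/-- `ℝⁿ` with the Euclidean norm. -/
abbrev Vec (n : ℕ) := EuclideanSpace ℝ (Fin n)

/-- Real `n × d` matrices with the Frobenius norm. -/
abbrev Mat (n d : ℕ) := EuclideanSpace ℝ (Fin n × Fin d)

/-- The `k`-th row of a matrix. -/
def row {n d : ℕ} (z : Mat n d) (k : Fin n) : Vec d := WithLp.toLp 2 (fun j => z (k, j))

/-- Componentwise positive part. -/
def pos {n : ℕ} (x : Vec n) : Vec n := WithLp.toLp 2 (fun i => max (x i) 0)

/-- Componentwise negative part. -/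
def neg {n : ℕ} (x : Vec n) : Vec n := WithLp.toLp 2 (fun i => max (-(x i)) 0)

/-- A generator is uniformly Lipschitz on `[0,T]`. -/
def UniformlyLipschitz {n d : ℕ} (T : ℝ)
    (g : ℝ → Vec n → Mat n d → Vec n) : Prop :=
  ∃ L : ℝ, 0 ≤ L ∧ ∀ t ∈ Set.Icc (0:ℝ) T, ∀ y y' : Vec n, ∀ z z' : Mat n d,
    ‖g t y z - g t y' z'‖ ≤ L * (‖y - y'‖ + ‖z - z'‖)

/-- auxiliary: `ε` in coordinate `k`, zero elsewhere. -/
def evec {n : ℕ} (k : Fin n) (ε : ℝ) : Vec n := WithLp.toLp 2 (fun i => if i = k then ε else 0)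

/-- auxiliary: `-ε` in coordinate `k`, `δ` elsewhere. -/
def dvec {n : ℕ} (k : Fin n) (ε : ℝ) (δ : Vec n) : Vec n :=
  WithLp.toLp 2 (fun i => if i = k then -ε else δ i)

lemma inner_euc {ι : Type*} [Fintype ι] (x y : EuclideanSpace ℝ ι) :
    ⟪x, y⟫ = ∑ i, x i * y i := by
  simp [PiLp.inner_apply, RCLike.inner_apply]
  exact Finset.sum_congr rfl fun _ _ => mul_comm _ _

lemma normsq_euc {ι : Type*} [Fintype ι] (x : EuclideanSpace ℝ ι) :
    ‖x‖ ^ 2 = ∑ i, (x i) ^ 2 := by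
  rw [← real_inner_self_eq_norm_sq, inner_euc]
  simp [sq]

lemma abs_apply_le_norm {ι : Type*} [Fintype ι] (x : EuclideanSpace ℝ ι) (i : ι) :
    |x i| ≤ ‖x‖ := by
  have h1 : (x i)^2 ≤ ‖x‖^2 := by
    rw [normsq_euc]
    exact Finset.single_le_sum (f := fun j => (x j)^2) (fun j _ => sq_nonneg _)
      (Finset.mem_univ i)
  nlinarith [abs_nonneg (x i), norm_nonneg x, sq_abs (x i)]

lemma le_zero_of_forall_le_mul {x C : ℝ} (hC : 0 < C)
    (h : ∀ ε : ℝ, 0 < ε → x ≤ C * ε) : x ≤ 0 := by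
  by_contra hx
  push_neg at hx
  have h2 := h (x / (2 * C)) (by positivity)
  have h3 : C * (x / (2 * C)) = x / 2 := by
    field_simp
  rw [h3] at h2
  linarith

lemma pos_dvec {n : ℕ} (k : Fin n) {ε : ℝ} (hε : 0 ≤ ε) {δ : Vec n}
    (hδ : ∀ i, 0 ≤ δ i) (hδk : δ k = 0) : pos (dvec k ε δ) = δ := by
  ext i
  by_cases hi : i = k
  · subst hi
    simp [pos, dvec, max_eq_right (neg_nonpos.mpr hε), hδk]
  · simp [pos, dvec, hi, max_eq_left (hδ i)]

lemma neg_dvec {n : ℕ} (k : Fin n) {ε : ℝ} (hε : 0 ≤ ε) {δ : Vec n}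
    (hδ : ∀ i, 0 ≤ δ i) : neg (dvec k ε δ) = evec k ε := by
  ext i
  by_cases hi : i = k
  · simp [neg, dvec, evec, hi, max_eq_left hε]
  · simp [neg, dvec, evec, hi, max_eq_right (neg_nonpos.mpr (hδ i))]

lemma normsq_evec {n : ℕ} (k : Fin n) (ε : ℝ) : ‖evec k ε‖ ^ 2 = ε ^ 2 := by
  rw [normsq_euc, Finset.sum_eq_single k]
  · simp [evec]
  · intro i _ hik; simp [evec, hik]
  · intro hk; exact absurd (Finset.mem_univ k) hk

lemma sum_evec_mul {n : ℕ} (k : Fin n) (ε : ℝ) (x : Vec n) :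
    ∑ i, evec k ε i * x i = ε * x k := by
  rw [Finset.sum_eq_single k]
  · simp [evec]
  · intro i _ hik; simp [evec, hik]
  · intro hk; exact absurd (Finset.mem_univ k) hk

lemma norm_sub_row_special {n d : ℕ} (k : Fin n) (z z' w : Mat n d)
    (hw : ∀ p : Fin n × Fin d, w p = if p.1 = k then z' p else z p) :
    ‖z - w‖ = ‖row z k - row z' k‖ := by
  have h1 : ‖z - w‖ ^ 2 = ‖row z k - row z' k‖ ^ 2 := by
    rw [normsq_euc, normsq_euc, Fintype.sum_prod_type]
    rw [Finset.sum_eq_single k]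
    · apply Finset.sum_congr rfl
      intro j _
      simp [PiLp.sub_apply, row, hw]
    · intro i _ hik
      apply Finset.sum_eq_zero
      intro j _
      simp [PiLp.sub_apply, hw, hik]
    · intro h; exact absurd (Finset.mem_univ k) h
  have h2 : ‖z - w‖ = Real.sqrt (‖z - w‖ ^ 2) := (Real.sqrt_sq (norm_nonneg _)).symm
  rw [h2, h1, Real.sqrt_sq (norm_nonneg _)]

/-- Hu–Peng's criterion for the comparison theorem with a single generator
is equivalent to: each component depends on `z` only through its own row and is
quasi-monotonously increasing. -/
theorem comparison_criterion_single_generator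
    {n d : ℕ} (hn : 0 < n) (hd : 0 < d) (T : ℝ) (hT : 0 < T)
    (g : ℝ → Vec n → Mat n d → Vec n) (hg : UniformlyLipschitz T g) :
    (∃ C : ℝ, 0 < C ∧ ∀ t ∈ Set.Icc (0:ℝ) T, ∀ y y' : Vec n, ∀ z z' : Mat n d,
        -4 * ⟪neg y, g t (pos y + y') z - g t y' z'⟫ ≤
          2 * ∑ k : Fin n, (if y k < 0 then (1:ℝ) else 0) * ‖row z k - row z' k‖ ^ 2
            + C * ‖neg y‖ ^ 2)
    ↔
    (∀ k : Fin n,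
      (∀ t ∈ Set.Icc (0:ℝ) T, ∀ y : Vec n, ∀ z z' : Mat n d,
        row z k = row z' k → g t y z k = g t y z' k) ∧
      (∀ t ∈ Set.Icc (0:ℝ) T, ∀ y δ : Vec n,
        (∀ i, 0 ≤ δ i) → δ k = 0 →
        ∀ z : Mat n d, g t y z k ≤ g t (δ + y) z k)) := by
  constructor
  · rintro ⟨C, hC, h⟩ k
    have h0 : ∀ i : Fin n, 0 ≤ (0 : Vec n) i := fun i => le_refl 0
    constructor
    · -- row dependence
      intro t ht y z z' hrow
      have key : ∀ u u' : Mat n d, row u k = row u' k → g t y u' k ≤ g t y u k := by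
        intro u u' hru
        have main : ∀ ε : ℝ, 0 < ε →
            4 * (g t y u' k - g t y u k) ≤ C * ε := by
          intro ε hε
          have h2 := h t ht (dvec k ε 0) y u u'
          rw [pos_dvec k hε.le h0 rfl, neg_dvec k hε.le h0, zero_add,
            inner_euc, sum_evec_mul, normsq_evec] at h2
          have hsum : ∑ k' : Fin n, (if dvec k ε 0 k' < 0 then (1:ℝ) else 0) *
              ‖row u k' - row u' k'‖ ^ 2 = 0 := by
            apply Finset.sum_eq_zero
            intro k' _
            by_cases hk' : k' = k
            · subst hk'
              rw [hru]
              simp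
            · simp [dvec, hk']
          rw [hsum] at h2
          rw [PiLp.sub_apply] at h2
          have h5 : ε * (4 * (g t y u' k - g t y u k)) ≤ ε * (C * ε) := by
            linear_combination h2
          exact le_of_mul_le_mul_left h5 hε
        have := le_zero_of_forall_le_mul hC main
        linarith
      exact le_antisymm (key z' z hrow.symm) (key z z' hrow)
    · -- quasi-monotonicity
      intro t ht y δ hδ hδk z
      have main : ∀ ε : ℝ, 0 < ε →
          4 * (g t y z k - g t (δ + y) z k) ≤ C * ε := by
        intro ε hε
        have h2 := h t ht (dvec k ε δ) y z z
        rw [pos_dvec k hε.le hδ hδk, neg_dvec k hε.le hδ,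
          inner_euc, sum_evec_mul, normsq_evec] at h2
        have hsum : ∑ k' : Fin n, (if dvec k ε δ k' < 0 then (1:ℝ) else 0) *
            ‖row z k' - row z k'‖ ^ 2 = 0 := by
          apply Finset.sum_eq_zero
          intro k' _
          simp [sub_self]
        rw [hsum] at h2
        rw [PiLp.sub_apply] at h2
        have h5 : ε * (4 * (g t y z k - g t (δ + y) z k)) ≤ ε * (C * ε) := by
          linear_combination h2
        exact le_of_mul_le_mul_left h5 hε
      have := le_zero_of_forall_le_mul hC main
      linarith
  · rintro hb
    obtain ⟨L, hL, hLip⟩ := hg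
    refine ⟨2 * L ^ 2 + 1, by positivity, ?_⟩
    intro t ht y y' z z'
    rw [inner_euc, normsq_euc, Finset.mul_sum, Finset.mul_sum, Finset.mul_sum,
      ← Finset.sum_add_distrib]
    apply Finset.sum_le_sum
    intro k _
    by_cases hyk : y k < 0
    · -- active coordinate
      have ha : neg y k = -(y k) := show max (-(y k)) 0 = -(y k) from max_eq_left (by linarith)
      have ha0 : 0 ≤ neg y k := le_max_right _ _
      -- quasi-monotonicity part
      have hX : g t y' z k ≤ g t (pos y + y') z k := by
        apply (hb k).2 t ht y' (pos y) (fun i => le_max_right _ _)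
        exact max_eq_right (le_of_lt hyk)
      -- Lipschitz-in-own-row part
      set w : Mat n d := WithLp.toLp 2 (fun p => if p.1 = k then z' p else z p) with hw
      have hroww : row w k = row z' k := by
        ext j
        simp [row, hw]
      have hgw : g t y' w k = g t y' z' k := (hb k).1 t ht y' w z' hroww
      have hY : |g t y' z k - g t y' z' k| ≤ L * ‖row z k - row z' k‖ := by
        rw [← hgw]
        have h1 : |(g t y' z - g t y' w) k| ≤ ‖g t y' z - g t y' w‖ :=
          abs_apply_le_norm _ k
        rw [PiLp.sub_apply] at h1
        have h2 := hLip t ht y' y' z w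
        rw [sub_self, norm_zero, norm_sub_row_special k z z' w (fun p => by rw [hw])] at h2
        calc |g t y' z k - g t y' w k| ≤ ‖g t y' z - g t y' w‖ := h1
          _ ≤ L * (0 + ‖row z k - row z' k‖) := h2
          _ = L * ‖row z k - row z' k‖ := by ring
      rw [PiLp.sub_apply]
      simp only [hyk, if_true]
      set a := neg y k
      set b := ‖row z k - row z' k‖
      set X := g t (pos y + y') z k - g t y' z k with hXdef
      set Y := g t y' z k - g t y' z' k with hYdef
      have hXY : g t (pos y + y') z k - g t y' z' k = X + Y := by ring
      rw [hXY]
      have hX0 : 0 ≤ X := by rw [hXdef]; linarith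
      have hY1 : -Y ≤ L * b := by
        have := abs_le.mp hY
        linarith [this.1]
      have hb0 : 0 ≤ b := norm_nonneg _
      nlinarith [mul_nonneg ha0 hX0, mul_le_mul_of_nonneg_left hY1 ha0,
        sq_nonneg (b - L * a), sq_nonneg a, mul_nonneg hL ha0]
    · -- inactive coordinate
      have ha : neg y k = 0 := by
        show max (-(y k)) 0 = 0
        apply max_eq_right
        simp only [not_lt] at hyk
        linarith
      simp [ha, hyk]
end
end

section
/- Let g be a uniformly Lipschitz generator. Then the following two conditions are equivalent. (a) There exists a constant C > 0 such that for all t ∈ [0,T], all λ ∈ [0,1], all y, y¹, y² ∈ ℝⁿ and all z, z¹, z² ∈ ℝ^{n×d}: −4⟨y⁻, λ·g(t,y¹,z¹) + (1−λ)·g(t,y²,z²) − g(t, λy¹ + (1−λ)y² − y⁺, z)⟩ ≤ 2·∑_{k=1}^{n} 1_{y_k<0}·|λz¹_k + (1−λ)z²_k − z_k|² + C·|y⁻|². (b) For every k ∈ {1,…,n}: g_k depends on z only through its k-th row (g_k(t,y,z) = g_k(t,y,z′) whenever z_k = z′_k); and for all t ∈ [0,T], λ ∈ [0,1], y¹, y²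 ∈ ℝⁿ, all δ ∈ ℝⁿ with δ ≥ 0 and δ_k = 0, and all z, z¹, z² ∈ ℝ^{n×d} with z_k = λz¹_k + (1−λ)z²_k: g_k(t, λy¹ + (1−λ)y² − δ, z) ≤ λ·g_k(t,y¹,z¹) + (1−λ)·g_k(t,y²,z²). (This is the deterministic core of the theorem that the multidimensional dynamic g-risk measure is nonincreasing and convex if and only if g is quasi-monotone increasingly convex.) -/
open scoped RealInnerProductSpace

noncomputable section

lemma row_apply {n d : ℕ} (z : Mat n d) (k : Fin n) (j : Fin d) :
    row z k j = z (k, j) := rfl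

lemma pos_apply {n : ℕ} (x : Vec n) (i : Fin n) : pos x i = max (x i) 0 := rfl

lemma neg_apply' {n : ℕ} (x : Vec n) (i : Fin n) : neg x i = max (-(x i)) 0 := rfl

lemma euc_norm_sq {ι : Type*} [Fintype ι] (a : EuclideanSpace ℝ ι) :
    ‖a‖ ^ 2 = ∑ i, (a i) ^ 2 := by
  rw [EuclideanSpace.norm_eq, Real.sq_sqrt (by positivity)]
  simp [sq_abs]

lemma euc_inner_eq {ι : Type*} [Fintype ι] (a b : EuclideanSpace ℝ ι) :
    ⟪a, b⟫ = ∑ i, a i * b i := by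
  simp [PiLp.inner_apply, RCLike.inner_apply, mul_comm]

lemma coord_le_norm {ι : Type*} [Fintype ι] (a : EuclideanSpace ℝ ι) (i : ι) :
    |a i| ≤ ‖a‖ := by
  have h1 : (a i) ^ 2 ≤ ‖a‖ ^ 2 := by
    rw [euc_norm_sq]
    exact Finset.single_le_sum (f := fun j => (a j)^2) (fun j _ => sq_nonneg _)
      (Finset.mem_univ i)
  nlinarith [abs_nonneg (a i), norm_nonneg a, sq_abs (a i)]

lemma row_support_norm {n d : ℕ} (i : Fin n) (v : Vec d) (M : Mat n d)
    (hM : ∀ p : Fin n × Fin d, M p = if p.1 = i then v p.2 else 0) : ‖M‖ = ‖v‖ := by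
  have h : ‖M‖^2 = ‖v‖^2 := by
    rw [euc_norm_sq, euc_norm_sq, Fintype.sum_prod_type]
    rw [Finset.sum_eq_single i]
    · simp [hM]
    · intro j _ hj; simp [hM, hj]
    · simp
  have h2 := congrArg Real.sqrt h
  rwa [Real.sqrt_sq (norm_nonneg _), Real.sqrt_sq (norm_nonneg _)] at h2

lemma inner_single {n : ℕ} (k : Fin n) (ε : ℝ) (a V : Vec n)
    (ha : ∀ i, a i = if i = k then ε else 0) : ⟪a, V⟫ = ε * V k := by
  rw [euc_inner_eq, Finset.sum_eq_single k]
  · simp [ha]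
  · intro j _ hj; simp [ha, hj]
  · simp

lemma norm_sq_single {n : ℕ} (k : Fin n) (ε : ℝ) (a : Vec n)
    (ha : ∀ i, a i = if i = k then ε else 0) : ‖a‖ ^ 2 = ε ^ 2 := by
  rw [euc_norm_sq, Finset.sum_eq_single k]
  · simp [ha]
  · intro j _ hj; simp [ha, hj]
  · simp

lemma nonneg_of_eps (C : ℝ) (hC : 0 < C) (B : ℝ)
    (h : ∀ ε : ℝ, 0 < ε → -4 * (ε * B) ≤ C * ε ^ 2) : 0 ≤ B := by
  by_contra hB
  push_neg at hB
  have hε : 0 < -B / C := div_pos (neg_pos.2 hB) hC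
  have h1 := h (-B / C) hε
  have h2 := mul_le_mul_of_nonneg_left h1 hC.le
  have hCne : C ≠ 0 := ne_of_gt hC
  have e1 : C * (-4 * (-B / C * B)) = 4 * B ^ 2 := by field_simp
  have e2 : C * (C * (-B / C) ^ 2) = B ^ 2 := by field_simp
  rw [e1, e2] at h2
  nlinarith [mul_pos (neg_pos.2 hB) (neg_pos.2 hB)]

/-- the deterministic core of the theorem that the multidimensional dynamic
`g`-risk measure is nonincreasing and convex iff `g` is quasi-monotone increasingly
convex. -/
theorem convexity_criterion
    {n d : ℕ} (hn : 0 < n) (hd : 0 < d) (T : ℝ) (hT : 0 < T)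
    (g : ℝ → Vec n → Mat n d → Vec n) (hg : UniformlyLipschitz T g) :
    (∃ C : ℝ, 0 < C ∧ ∀ t ∈ Set.Icc (0:ℝ) T, ∀ lam ∈ Set.Icc (0:ℝ) 1,
        ∀ y y₁ y₂ : Vec n, ∀ z z₁ z₂ : Mat n d,
        -4 * ⟪neg y, lam • g t y₁ z₁ + (1 - lam) • g t y₂ z₂
                - g t (lam • y₁ + (1 - lam) • y₂ - pos y) z⟫ ≤
          2 * ∑ k : Fin n, (if y k < 0 then (1:ℝ) else 0) *
              ‖lam • row z₁ k + (1 - lam) • row z₂ k - row z k‖ ^ 2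
            + C * ‖neg y‖ ^ 2)
    ↔
    (∀ k : Fin n,
      (∀ t ∈ Set.Icc (0:ℝ) T, ∀ y : Vec n, ∀ z z' : Mat n d,
        row z k = row z' k → g t y z k = g t y z' k) ∧
      (∀ t ∈ Set.Icc (0:ℝ) T, ∀ lam ∈ Set.Icc (0:ℝ) 1, ∀ y₁ y₂ δ : Vec n,
        (∀ i, 0 ≤ δ i) → δ k = 0 →
        ∀ z z₁ z₂ : Mat n d, row z k = lam • row z₁ k + (1 - lam) • row z₂ k →
          g t (lam • y₁ + (1 - lam) • y₂ - δ) z k ≤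
            lam * g t y₁ z₁ k + (1 - lam) * g t y₂ z₂ k)) := by
  obtain ⟨L, hL, hLip⟩ := hg
  constructor
  · -- (a) → (b)
    rintro ⟨C, hC, hA⟩ k
    constructor
    · -- z-dependence only through row k
      intro t ht y zz zz' hrowzz
      have claim : ∀ z z' : Mat n d, row z k = row z' k → g t y z k ≤ g t y z' k := by
        intro z z' hrow
        have key : ∀ ε : ℝ, 0 < ε →
            -4 * (ε * (g t y z' k - g t y z k)) ≤ C * ε ^ 2 := by
          intro ε hε
          obtain ⟨yh, hyh⟩ : ∃ yh : Vec n, ∀ i, yh i = if i = k then -ε else 0 :=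
            ⟨WithLp.toLp 2 (fun i => if i = k then -ε else 0), fun _ => rfl⟩
          have hnegy : ∀ i, neg yh i = if i = k then ε else 0 := by
            intro i
            rw [neg_apply', hyh]
            by_cases hi : i = k <;> simp [hi, le_of_lt hε]
          have hposy : pos yh = (0 : Vec n) := by
            ext i
            rw [pos_apply, hyh]
            by_cases hi : i = k <;> simp [hi, le_of_lt hε]
          have h := hA t ht 1 ⟨zero_le_one, le_refl 1⟩ yh y y z z' z'
          rw [hposy] at h
          simp only [one_smul, sub_self, zero_smul, add_zero, sub_zero] at h
          have hinner : ⟪neg yh, g t y z' - g t y z⟫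
              = ε * (g t y z' k - g t y z k) := by
            rw [inner_single k ε _ _ hnegy]
            simp [PiLp.sub_apply]
          have hsum : ∑ i : Fin n, (if yh i < 0 then (1:ℝ) else 0) *
              ‖row z' i - row z i‖ ^ 2
              = 0 := by
            apply Finset.sum_eq_zero
            intro i _
            by_cases hi : i = k
            · subst hi
              rw [hrow]
              simp
            · simp [hyh, hi]
          have hns : ‖neg yh‖ ^ 2 = ε ^ 2 := norm_sq_single k ε _ hnegy
          rw [hinner, hsum, hns] at h
          linarith
        have := nonneg_of_eps C hC _ key
        linarith
      exact le_antisymm (claim zz zz' hrowzz) (claim zz' zz hrowzz.symm)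
    · -- convexity
      intro t ht lam hlam y₁ y₂ δ hδ hδk z z₁ z₂ hrow
      have key : ∀ ε : ℝ, 0 < ε →
          -4 * (ε * (lam * g t y₁ z₁ k + (1 - lam) * g t y₂ z₂ k
            - g t (lam • y₁ + (1 - lam) • y₂ - δ) z k)) ≤ C * ε ^ 2 := by
        intro ε hε
        obtain ⟨yh, hyh⟩ : ∃ yh : Vec n, ∀ i, yh i = if i = k then -ε else δ i :=
          ⟨WithLp.toLp 2 (fun i => if i = k then -ε else δ i), fun _ => rfl⟩
        have hnegy : ∀ i, neg yh i = if i = k then ε else 0 := by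
          intro i
          rw [neg_apply', hyh]
          by_cases hi : i = k <;> simp [hi, le_of_lt hε, hδ i]
        have hposy : pos yh = δ := by
          ext i
          rw [pos_apply, hyh]
          by_cases hi : i = k
          · subst hi; simp [le_of_lt hε, hδk]
          · simp [hi, hδ i]
        have h := hA t ht lam hlam yh y₁ y₂ z z₁ z₂
        rw [hposy] at h
        have hinner : ⟪neg yh, lam • g t y₁ z₁ + (1 - lam) • g t y₂ z₂
            - g t (lam • y₁ + (1 - lam) • y₂ - δ) z⟫
            = ε * (lam * g t y₁ z₁ k + (1 - lam) * g t y₂ z₂ k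
            - g t (lam • y₁ + (1 - lam) • y₂ - δ) z k) := by
          rw [inner_single k ε _ _ hnegy]
          simp [PiLp.sub_apply, PiLp.add_apply, PiLp.smul_apply]
        have hsum : ∑ i : Fin n, (if yh i < 0 then (1:ℝ) else 0) *
            ‖lam • row z₁ i + (1 - lam) • row z₂ i - row z i‖ ^ 2 = 0 := by
          apply Finset.sum_eq_zero
          intro i _
          by_cases hi : i = k
          · subst hi
            have hv : lam • row z₁ i + (1 - lam) • row z₂ i - row z i = 0 := by
              rw [hrow]; simp
            rw [hv]; simp
          · have hni : ¬ (yh i < 0) := by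
              rw [hyh]; simp [hi]; exact hδ i
            simp [hni]
        have hns : ‖neg yh‖ ^ 2 = ε ^ 2 := norm_sq_single k ε _ hnegy
        rw [hinner, hsum, hns] at h
        linarith
      have := nonneg_of_eps C hC _ key
      linarith
  · -- (b) → (a)
    intro hb
    refine ⟨2 * L ^ 2 + 1, by positivity, ?_⟩
    intro t ht lam hlam y y₁ y₂ z z₁ z₂
    set w : Vec n := lam • y₁ + (1 - lam) • y₂ - pos y with hw
    set V : Vec n := lam • g t y₁ z₁ + (1 - lam) • g t y₂ z₂ - g t w z with hV
    have key : ∀ i : Fin n, -4 * (neg y i * V i) ≤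
        2 * ((if y i < 0 then (1:ℝ) else 0) *
          ‖lam • row z₁ i + (1 - lam) • row z₂ i - row z i‖ ^ 2)
        + (2 * L ^ 2 + 1) * (neg y i) ^ 2 := by
      intro i
      by_cases hyi : y i < 0
      · -- active coordinate
        have hnegi : neg y i = -(y i) := by
          rw [neg_apply']; simp [le_of_lt hyi]
        have hposi : pos y i = 0 := by
          rw [pos_apply]; simp [le_of_lt hyi]
        obtain ⟨z', hz'⟩ : ∃ z' : Mat n d, ∀ p : Fin n × Fin d,
            z' p = if p.1 = i then (lam • row z₁ i + (1 - lam) • row z₂ i) p.2 else z p :=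
          ⟨WithLp.toLp 2 (fun p => if p.1 = i then (lam • row z₁ i + (1 - lam) • row z₂ i) p.2 else z p),
            fun _ => rfl⟩
        have hrowz' : row z' i = lam • row z₁ i + (1 - lam) • row z₂ i := by
          ext j
          rw [row_apply, hz']
          simp
        -- convexity from (b)
        have hconv : g t w z' i ≤ lam * g t y₁ z₁ i + (1 - lam) * g t y₂ z₂ i := by
          have := (hb i).2 t ht lam hlam y₁ y₂ (pos y)
            (fun j => le_max_right _ _) hposi z' z₁ z₂ hrowz'
          rw [← hw] at this
          exact this
        -- Lipschitz bound on replacing z by z'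
        have hzz' : ‖g t w z - g t w z'‖ ≤
            L * ‖lam • row z₁ i + (1 - lam) • row z₂ i - row z i‖ := by
          have h1 := hLip t ht w w z z'
          have h2 : ‖z - z'‖ = ‖lam • row z₁ i + (1 - lam) • row z₂ i - row z i‖ := by
            rw [← norm_neg (lam • row z₁ i + (1 - lam) • row z₂ i - row z i)]
            apply row_support_norm i _ _
            rintro ⟨p1, p2⟩
            by_cases hp : p1 = i
            · subst hp
              rw [PiLp.sub_apply, hz']
              simp [PiLp.neg_apply, PiLp.sub_apply, PiLp.add_apply, PiLp.smul_apply,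
                row_apply]
            · rw [PiLp.sub_apply, hz']
              simp [hp]
          rw [sub_self, norm_zero, zero_add, h2] at h1
          exact h1
        have hcoord : |(g t w z) i - (g t w z') i| ≤ ‖g t w z - g t w z'‖ := by
          have := coord_le_norm (g t w z - g t w z') i
          rwa [PiLp.sub_apply] at this
        have habs := abs_le.mp (hcoord.trans hzz')
        have hVi : V i = lam * g t y₁ z₁ i + (1 - lam) * g t y₂ z₂ i - g t w z i := by
          rw [hV, PiLp.sub_apply, PiLp.add_apply, PiLp.smul_apply, PiLp.smul_apply]
          simp
        rw [hVi, hnegi, if_pos hyi]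
        have hr0 : 0 ≤ ‖lam • row z₁ i + (1 - lam) • row z₂ i - row z i‖ := norm_nonneg _
        have ha0 : 0 ≤ -(y i) := by linarith
        nlinarith [sq_nonneg (‖lam • row z₁ i + (1 - lam) • row z₂ i - row z i‖
            - L * (-(y i))), habs.1, habs.2, mul_nonneg ha0 hr0,
          mul_nonneg (mul_nonneg hL ha0) hr0, hconv]
      · -- inactive coordinate
        have hnegi : neg y i = 0 := by
          rw [neg_apply']
          simp
          linarith [not_lt.mp hyi]
        rw [hnegi, if_neg hyi]
        simp
    calc -4 * ⟪neg y, V⟫ = ∑ i : Fin n, -4 * (neg y i * V i) := by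
          rw [euc_inner_eq, Finset.mul_sum]
      _ ≤ ∑ i : Fin n, (2 * ((if y i < 0 then (1:ℝ) else 0) *
            ‖lam • row z₁ i + (1 - lam) • row z₂ i - row z i‖ ^ 2)
          + (2 * L ^ 2 + 1) * (neg y i) ^ 2) :=
          Finset.sum_le_sum (fun i _ => key i)
      _ = 2 * ∑ i : Fin n, (if y i < 0 then (1:ℝ) else 0) *
            ‖lam • row z₁ i + (1 - lam) • row z₂ i - row z i‖ ^ 2
          + (2 * L ^ 2 + 1) * ‖neg y‖ ^ 2 := by
          rw [Finset.sum_add_distrib, ← Finset.mul_sum, ← Finset.mul_sum, euc_norm_sq]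
end
end
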